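/- Necessity of the hypothesis m ≤ 2k-2 in the clique bound: let k ≥ 2 and m ≥ 2k-1 be integers and let n ≥ 2(m-k+1). Then the graph that is the disjoint union of two cliques of sizes ⌊n/2⌋ and ⌈n/2⌉ has the property that every subset of its vertex set of size m includes a clique of size k, yet its clique number ⌈n/2⌉ is strictly less than n - m + k. -/

import Mathlib

/-- The disjoint union of two cliques, of sizes `⌊n/2⌋` (vertices with index
`< n/2`) and `⌈n/2⌉` (the remaining vertices), on the vertex set `Fin n`. -/
def twoCliquesGraph (n : ℕ) : SimpleGraph (Fin n) where
  Adj u v := u ≠ v ∧ (((u : ℕ) < n / 2) ↔ ((v : ℕ) < n / 2))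
  symm := by
    constructor
    intro u v h
    exact ⟨h.1.symm, h.2.symm⟩
  loopless := by
    constructor
    intro v h
    exact h.1 rfl

lemma twoCliques_card_lo (n : ℕ) (hn : 0 < n) :
    (Finset.univ.filter (fun v : Fin n => (v:ℕ) < n/2)).card = n/2 := by
  have h2 : n / 2 < n := by omega
  have : (Finset.univ.filter (fun v : Fin n => (v:ℕ) < n/2)) = Finset.Iio ⟨n/2, h2⟩ := by
    ext v; simp [Fin.lt_def]
  rw [this, Fin.card_Iio]

lemma twoCliques_card_hi (n : ℕ) (hn : 0 < n) :
    (Finset.univ.filter (fun v : Fin n => ¬ (v:ℕ) < n/2)).card = (n+1)/2 := by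
  have := twoCliques_card_lo n hn
  have h := Finset.card_filter_add_card_filter_not
    (s := (Finset.univ : Finset (Fin n))) (p := fun v : Fin n => (v:ℕ) < n/2)
  rw [Finset.card_univ, Fintype.card_fin] at h
  omega

/-- If all elements of `s` are on the same side, `s` is a clique. -/
lemma twoCliques_isClique (n : ℕ) (s : Finset (Fin n))
    (h : ∀ u ∈ s, ∀ v ∈ s, (((u : Fin n) : ℕ) < n/2 ↔ ((v : Fin n) : ℕ) < n/2)) :
    (twoCliquesGraph n).IsClique s := by
  intro u hu v hv huv
  exact ⟨huv, h u hu v hv⟩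

lemma twoCliques_clique_card_le (n : ℕ) (hn : 0 < n) (s : Finset (Fin n))
    (hs : (twoCliquesGraph n).IsClique s) : s.card ≤ (n+1)/2 := by
  rcases s.eq_empty_or_nonempty with rfl | ⟨u, hu⟩
  · simp
  have hsub : ∀ v ∈ s, (((v : Fin n) : ℕ) < n/2 ↔ ((u : Fin n) : ℕ) < n/2) := by
    intro v hv
    rcases eq_or_ne v u with rfl | hvu
    · rfl
    · exact (hs hv hu hvu).2
  by_cases hcase : (u : ℕ) < n/2
  · have : s ⊆ Finset.univ.filter (fun v : Fin n => (v:ℕ) < n/2) := by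
      intro v hv
      simp only [Finset.mem_filter, Finset.mem_univ, true_and]
      exact (hsub v hv).mpr hcase
    calc s.card ≤ _ := Finset.card_le_card this
      _ = n/2 := twoCliques_card_lo n hn
      _ ≤ (n+1)/2 := by omega
  · have : s ⊆ Finset.univ.filter (fun v : Fin n => ¬ (v:ℕ) < n/2) := by
      intro v hv
      simp only [Finset.mem_filter, Finset.mem_univ, true_and]
      exact fun hlt => hcase ((hsub v hv).mp hlt)
    calc s.card ≤ _ := Finset.card_le_card this
      _ = (n+1)/2 := twoCliques_card_hi n hn

/-- **Necessity of the hypothesis `m ≤ 2k - 2`.**  Let `k ≥ 2`, `m ≥ 2k - 1`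
and `n ≥ 2(m - k + 1)`.  The disjoint union of two cliques of sizes `⌊n/2⌋` and
`⌈n/2⌉` has the property that every `m`-element vertex set includes a clique of
size `k`, yet its clique number `⌈n/2⌉` is strictly less than `n - m + k`. -/
theorem two_cliques_counterexample
    (k m n : ℕ) (hk : 2 ≤ k) (hm : 2 * k - 1 ≤ m) (hn : 2 * (m - k + 1) ≤ n) :
    (∀ W : Finset (Fin n), W.card = m →
      ∃ K ⊆ W, (twoCliquesGraph n).IsNClique k K) ∧
    (twoCliquesGraph n).cliqueNum = (n + 1) / 2 ∧
    (n + 1) / 2 < n - m + k := by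
  have hn0 : 0 < n := by omega
  refine ⟨?_, ?_, by omega⟩
  · intro W hW
    have hsplit := Finset.card_filter_add_card_filter_not
      (s := W) (p := fun v : Fin n => (v:ℕ) < n/2)
    rw [hW] at hsplit
    have : k ≤ (W.filter (fun v : Fin n => (v:ℕ) < n/2)).card ∨
        k ≤ (W.filter (fun v : Fin n => ¬ (v:ℕ) < n/2)).card := by omega
    rcases this with h | h
    · obtain ⟨K, hKs, hKc⟩ := Finset.exists_subset_card_eq h
      refine ⟨K, hKs.trans (Finset.filter_subset _ _), ?_, hKc⟩
      refine twoCliques_isClique n K fun u hu v hv => ?_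
      have hu' := (Finset.mem_filter.mp (hKs hu)).2
      have hv' := (Finset.mem_filter.mp (hKs hv)).2
      simp [hu', hv']
    · obtain ⟨K, hKs, hKc⟩ := Finset.exists_subset_card_eq h
      refine ⟨K, hKs.trans (Finset.filter_subset _ _), ?_, hKc⟩
      refine twoCliques_isClique n K fun u hu v hv => ?_
      have hu' := (Finset.mem_filter.mp (hKs hu)).2
      have hv' := (Finset.mem_filter.mp (hKs hv)).2
      simp [hu', hv']
  · apply le_antisymm
    · obtain ⟨s, hs⟩ := (twoCliquesGraph n).exists_isNClique_cliqueNum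
      rw [← hs.card_eq]
      exact twoCliques_clique_card_le n hn0 s hs.isClique
    · have hc : (twoCliquesGraph n).IsClique
          (Finset.univ.filter (fun v : Fin n => ¬ (v:ℕ) < n/2)) := by
        refine twoCliques_isClique n _ fun u hu v hv => ?_
        have hu' := (Finset.mem_filter.mp hu).2
        have hv' := (Finset.mem_filter.mp hv).2
        simp [hu', hv']
      calc (n+1)/2 = _ := (twoCliques_card_hi n hn0).symm
        _ ≤ _ := hc.card_le_cliqueNum
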